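/- Let n ≥ 1, α = (α_1, …, α_{n+1}) ∈ ℝ^{n+1} with α_1 ≥ α_2 ≥ … ≥ α_{n+1}, β = (β_1, …, β_n) ∈ ℝ^n with β_1 ≥ β_2 ≥ … ≥ β_n, and suppose t ∈ ℝ satisfies the interlacing condition. Then Π over pairs (k,l) with 1 ≤ k ≤ n+1, 1 ≤ l ≤ n and k + l ≤ n of (1 + |t + α_k + β_l|) is ≥ μ(β), and likewise Π over pairs (k,l) with 1 ≤ k ≤ n+1, 1 ≤ l ≤ n and k + l ≥ n + 3 of (1 + |t + α_k + β_l|) is ≥ μ(β). -/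
import Mathlib


open Finset

/-- `μ(β) = Π_{1 ≤ k < l ≤ n} (1 + |β_k − β_l|)`. -/
noncomputable def mufun (n : ℕ) (β : ℕ → ℝ) : ℝ :=
  ∏ k ∈ Icc 1 n, ∏ l ∈ Ioc k n, (1 + |β k - β l|)

/-- Let `n ≥ 1`, `α_1 ≥ … ≥ α_{n+1}`, `β_1 ≥ … ≥ β_n`, and suppose `t` satisfies
the interlacing condition `−α_{n+2−j} ≥ β_j + t ≥ −α_{n+1−j}` for `1 ≤ j ≤ n`.
Then the product of `1 + |t + α_k + β_l|` over pairs `(k, l)` with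
`1 ≤ k ≤ n+1`, `1 ≤ l ≤ n`, `k + l ≤ n` is `≥ μ(β)`, and likewise the product
over pairs with `k + l ≥ n + 3` is `≥ μ(β)`. -/
theorem statement3 (n : ℕ) (hn : 1 ≤ n) (α β : ℕ → ℝ)
    (hα : ∀ k, 1 ≤ k → k ≤ n → α (k + 1) ≤ α k)
    (hβ : ∀ k, 1 ≤ k → k + 1 ≤ n → β (k + 1) ≤ β k)
    (t : ℝ)
    (ht : ∀ j, 1 ≤ j → j ≤ n →
      β j + t ≤ -α (n + 2 - j) ∧ -α (n + 1 - j) ≤ β j + t) :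
    mufun n β ≤
      (∏ p ∈ (Icc 1 (n + 1) ×ˢ Icc 1 n).filter (fun p => p.1 + p.2 ≤ n),
        (1 + |t + α p.1 + β p.2|)) ∧
    mufun n β ≤
      (∏ p ∈ (Icc 1 (n + 1) ×ˢ Icc 1 n).filter (fun p => n + 3 ≤ p.1 + p.2),
        (1 + |t + α p.1 + β p.2|)) := by
  -- monotonicity of β on [1, n]
  have hβ' : ∀ k, 1 ≤ k → ∀ l, k ≤ l → l ≤ n → β l ≤ β k := by
    intro k hk l hkl
    induction l, hkl using Nat.le_induction with
    | base => intro _; exact le_refl _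
    | succ m hm ih =>
      intro hm1
      exact (hβ m (hk.trans hm) (by omega)).trans (ih (by omega))
  set S : Finset ((_ : ℕ) × ℕ) := (Icc 1 n).sigma (fun k => Ioc k n) with hS
  have hmem : ∀ p ∈ S, 1 ≤ p.1 ∧ p.1 < p.2 ∧ p.2 ≤ n := by
    intro p hp
    simp only [hS, Finset.mem_sigma, Finset.mem_Icc, Finset.mem_Ioc] at hp
    omega
  have hmu : mufun n β = ∏ p ∈ S, (1 + |β p.1 - β p.2|) := by
    rw [mufun]; exact Finset.prod_sigma' _ _ _
  constructor
  · calc mufun n β = ∏ p ∈ S, (1 + |β p.1 - β p.2|) := hmu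
      _ ≤ ∏ p ∈ S, (1 + |t + α (n + 1 - p.2) + β p.1|) := by
          apply Finset.prod_le_prod
          · intro p _; positivity
          · intro p hp
            obtain ⟨h1, h2, h3⟩ := hmem p hp
            have hb := hβ' p.1 h1 p.2 (le_of_lt h2) h3
            have hi := (ht p.2 (by omega) h3).2
            rw [abs_of_nonneg (by linarith), abs_of_nonneg (by linarith)]
            linarith
      _ = _ := by
          apply Finset.prod_nbij' (fun p => (n + 1 - p.2, p.1))
            (fun q => ⟨q.2, n + 1 - q.1⟩)
          · intro p hp
            obtain ⟨h1, h2, h3⟩ := hmem p hp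
            simp only [Finset.mem_filter, Finset.mem_product, Finset.mem_Icc]
            omega
          · intro q hq
            simp only [Finset.mem_filter, Finset.mem_product, Finset.mem_Icc] at hq
            simp only [hS, Finset.mem_sigma, Finset.mem_Icc, Finset.mem_Ioc]
            omega
          · intro p hp
            obtain ⟨h1, h2, h3⟩ := hmem p hp
            have : n + 1 - (n + 1 - p.2) = p.2 := by omega
            simp [this]
          · intro q hq
            simp only [Finset.mem_filter, Finset.mem_product, Finset.mem_Icc] at hq
            have : n + 1 - (n + 1 - q.1) = q.1 := by omega
            simp [this]
          · intro p hp; rfl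
  · calc mufun n β = ∏ p ∈ S, (1 + |β p.1 - β p.2|) := hmu
      _ ≤ ∏ p ∈ S, (1 + |t + α (n + 2 - p.1) + β p.2|) := by
          apply Finset.prod_le_prod
          · intro p _; positivity
          · intro p hp
            obtain ⟨h1, h2, h3⟩ := hmem p hp
            have hb := hβ' p.1 h1 p.2 (le_of_lt h2) h3
            have hi := (ht p.1 h1 (by omega)).1
            rw [abs_of_nonneg (by linarith), abs_of_nonpos (by linarith)]
            linarith
      _ = _ := by
          apply Finset.prod_nbij' (fun p => (n + 2 - p.1, p.2))
            (fun q => ⟨n + 2 - q.1, q.2⟩)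
          · intro p hp
            obtain ⟨h1, h2, h3⟩ := hmem p hp
            simp only [Finset.mem_filter, Finset.mem_product, Finset.mem_Icc]
            omega
          · intro q hq
            simp only [Finset.mem_filter, Finset.mem_product, Finset.mem_Icc] at hq
            simp only [hS, Finset.mem_sigma, Finset.mem_Icc, Finset.mem_Ioc]
            omega
          · intro p hp
            obtain ⟨h1, h2, h3⟩ := hmem p hp
            have : n + 2 - (n + 2 - p.1) = p.1 := by omega
            simp [this]
          · intro q hq
            simp only [Finset.mem_filter, Finset.mem_product, Finset.mem_Icc] at hq
            have : n + 2 - (n + 2 - q.1) = q.1 := by omega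
            simp [this]
          · intro p hp; rfl
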